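/- For every complex number q with |q| < 1, θ₃(q)² · θ₄(q)² = θ₄(q²)⁴, where θ₃(q) = Σ_{n∈ℤ} q^{n²} and θ₄(q) = Σ_{n∈ℤ} (−1)ⁿ q^{n²}. In particular, for 0 < q < 1 real, √(θ₃(q)² θ₄(q)²) = θ₄(q²)². -/

import Mathlib

/-- Jacobi theta function `θ₃(q) = ∑_{n ∈ ℤ} q^{n²}`. -/
noncomputable def theta3 (q : ℂ) : ℂ := ∑' n : ℤ, q ^ (n ^ 2)

/-- Jacobi theta function `θ₄(q) = ∑_{n ∈ ℤ} (−1)ⁿ q^{n²}`. -/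
noncomputable def theta4 (q : ℂ) : ℂ := ∑' n : ℤ, (-1 : ℂ) ^ n * q ^ (n ^ 2)

/-- Real-valued Jacobi theta function `θ₃` for real `q`. -/
noncomputable def theta3Real (q : ℝ) : ℝ := ∑' n : ℤ, q ^ (n ^ 2)

/-- Real-valued Jacobi theta function `θ₄` for real `q`. -/
noncomputable def theta4Real (q : ℝ) : ℝ := ∑' n : ℤ, (-1 : ℝ) ^ n * q ^ (n ^ 2)

lemma summable_norm_theta {K : Type*} [NormedDivisionRing K] {q : K} (hq : ‖q‖ < 1) :
    Summable fun n : ℤ => ‖q ^ (n ^ 2 : ℤ)‖ := by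
  have h0 : 0 ≤ ‖q‖ := norm_nonneg q
  have hgeom : Summable fun n : ℕ => ‖q‖ ^ n := summable_geometric_of_lt_one h0 hq
  have h1 : Summable fun n : ℤ => ‖q‖ ^ n.natAbs := by
    apply Summable.of_nat_of_neg <;> simpa using hgeom
  apply h1.of_nonneg_of_le (fun n => norm_nonneg _)
  intro n
  have hEq : ‖q ^ (n ^ 2 : ℤ)‖ = ‖q‖ ^ (n.natAbs ^ 2) := by
    rw [norm_zpow, show (n ^ 2 : ℤ) = ((n.natAbs ^ 2 : ℕ) : ℤ) by
      exact_mod_cast (Int.natAbs_sq n).symm, zpow_natCast]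
  rw [hEq]
  exact pow_le_pow_of_le_one h0 hq.le (Nat.le_self_pow two_ne_zero _)

lemma neg_one_zpow_inv (k : ℤ) : ((-1 : ℂ) ^ k)⁻¹ = (-1 : ℂ) ^ k := by
  rcases Int.even_or_odd k with h | h
  · rw [h.neg_one_zpow]; norm_num
  · rw [h.neg_one_zpow]; norm_num

lemma neg_one_zpow_of_odd_sum {m n : ℤ} (h : ¬ Even (m + n)) :
    (-1 : ℂ) ^ m = -((-1 : ℂ) ^ n) := by
  have hodd : Odd (m + n) := Int.not_even_iff_odd.mp h
  have h2 : (-1 : ℂ) ^ m * (-1 : ℂ) ^ n = -1 := by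
    rw [← zpow_add₀ (by norm_num : (-1 : ℂ) ≠ 0), hodd.neg_one_zpow]
  have h4 : ((-1 : ℂ) ^ n) ≠ 0 := zpow_ne_zero n (by norm_num)
  have h5 : (-1 : ℂ) ^ m = -((-1 : ℂ) ^ n)⁻¹ := by
    field_simp
    linear_combination h2
  rw [h5, neg_one_zpow_inv]

/-- The key identity: `θ₃(q) θ₄(q) = θ₄(q²)²`. -/
lemma theta3_mul_theta4 (q : ℂ) (hq : ‖q‖ < 1) :
    theta3 q * theta4 q = theta4 (q ^ 2) ^ 2 := by
  rcases eq_or_ne q 0 with rfl | hq0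
  · have h3 : theta3 0 = 1 := by
      rw [theta3, tsum_eq_single 0 (fun n hn => zero_zpow _ (pow_ne_zero 2 hn))]
      norm_num
    have h4 : theta4 0 = 1 := by
      rw [theta4, tsum_eq_single 0 (fun n hn => by
        rw [zero_zpow _ (pow_ne_zero 2 hn), mul_zero])]
      norm_num
    rw [h3, h4]
    norm_num [h4]
  · -- summability facts
    have hsum3 : Summable fun n : ℤ => ‖q ^ (n ^ 2 : ℤ)‖ := summable_norm_theta hq
    have hsum4 : Summable fun n : ℤ => ‖(-1 : ℂ) ^ n * q ^ (n ^ 2 : ℤ)‖ := by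
      simpa [norm_mul, norm_zpow] using hsum3
    have hq2 : ‖q ^ 2‖ < 1 := by
      rw [norm_pow]
      exact pow_lt_one₀ (norm_nonneg _) hq two_ne_zero
    have hsumh : Summable fun n : ℤ => ‖(-1 : ℂ) ^ n * (q ^ 2) ^ (n ^ 2 : ℤ)‖ := by
      simpa [norm_mul, norm_zpow] using summable_norm_theta hq2
    set G : ℤ × ℤ → ℂ := fun p => q ^ (p.1 ^ 2 : ℤ) * ((-1 : ℂ) ^ p.2 * q ^ (p.2 ^ 2 : ℤ))
      with hG
    have hGsum : Summable G := by
      rw [hG]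
      exact summable_mul_of_summable_norm (f := fun n : ℤ => q ^ (n ^ 2 : ℤ))
        (g := fun n : ℤ => (-1 : ℂ) ^ n * q ^ (n ^ 2 : ℤ)) hsum3 hsum4
    -- LHS as a double sum
    have hlhs : theta3 q * theta4 q = ∑' p : ℤ × ℤ, G p := by
      rw [hG, theta3, theta4]
      exact tsum_mul_tsum_of_summable_norm (f := fun n : ℤ => q ^ (n ^ 2 : ℤ))
        (g := fun n : ℤ => (-1 : ℂ) ^ n * q ^ (n ^ 2 : ℤ)) hsum3 hsum4
    -- the reindexing map
    set e : ℤ × ℤ → ℤ × ℤ := fun p => (p.1 + p.2, p.1 - p.2) with he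
    have einj : Function.Injective e := by
      intro a b hab
      simp only [he, Prod.ext_iff] at hab ⊢
      omega
    have hrange : Set.range e = {p : ℤ × ℤ | Even (p.1 + p.2)} := by
      ext p
      constructor
      · rintro ⟨⟨j, k⟩, rfl⟩
        exact ⟨j, by ring⟩
      · rintro ⟨r, hr⟩
        exact ⟨(r, p.1 - r), by simp only [he, Prod.ext_iff]; constructor <;> omega⟩
    -- the composition with e gives the RHS terms
    have hcomp : ∀ p : ℤ × ℤ, G (e p) =
        ((-1 : ℂ) ^ p.1 * (q ^ 2) ^ (p.1 ^ 2 : ℤ)) *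
        ((-1 : ℂ) ^ p.2 * (q ^ 2) ^ (p.2 ^ 2 : ℤ)) := by
      rintro ⟨j, k⟩
      simp only [hG, he]
      have hsign : (-1 : ℂ) ^ (j - k) = (-1 : ℂ) ^ j * (-1 : ℂ) ^ k := by
        rw [zpow_sub₀ (by norm_num : (-1 : ℂ) ≠ 0), div_eq_mul_inv, neg_one_zpow_inv]
      have hpow : ∀ a b : ℤ, (q ^ 2) ^ (a : ℤ) * (q ^ 2) ^ (b : ℤ) = q ^ (2 * a + 2 * b) := by
        intro a b
        rw [← zpow_natCast q 2, ← zpow_mul, ← zpow_mul, ← zpow_add₀ hq0]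
        norm_num
      have hq' : q ^ ((j + k) ^ 2 : ℤ) * q ^ ((j - k) ^ 2 : ℤ)
          = q ^ (2 * j ^ 2 + 2 * k ^ 2) := by
        rw [← zpow_add₀ hq0]
        congr 1
        ring
      calc q ^ ((j + k) ^ 2 : ℤ) * ((-1 : ℂ) ^ (j - k) * q ^ ((j - k) ^ 2 : ℤ))
          = ((-1 : ℂ) ^ j * (-1 : ℂ) ^ k) *
            (q ^ ((j + k) ^ 2 : ℤ) * q ^ ((j - k) ^ 2 : ℤ)) := by rw [hsign]; ring
        _ = ((-1 : ℂ) ^ j * (-1 : ℂ) ^ k) * q ^ (2 * j ^ 2 + 2 * k ^ 2) := by rw [hq']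
        _ = ((-1 : ℂ) ^ j * (q ^ 2) ^ (j ^ 2 : ℤ)) *
            ((-1 : ℂ) ^ k * (q ^ 2) ^ (k ^ 2 : ℤ)) := by
              rw [show q ^ (2 * j ^ 2 + 2 * k ^ 2) = (q ^ 2) ^ (j ^ 2 : ℤ) * (q ^ 2) ^ (k ^ 2 : ℤ)
                from (hpow _ _).symm]
              ring
    -- RHS as a double sum
    have hrhs : theta4 (q ^ 2) ^ 2 = ∑' p : ℤ × ℤ, G (e p) := by
      rw [sq, theta4,
        tsum_mul_tsum_of_summable_norm (f := fun n : ℤ => (-1 : ℂ) ^ n * (q ^ 2) ^ (n ^ 2 : ℤ))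
          (g := fun n : ℤ => (-1 : ℂ) ^ n * (q ^ 2) ^ (n ^ 2 : ℤ)) hsumh hsumh]
      exact (tsum_congr hcomp).symm
    -- the sum over the range of e
    have hrange_sum : ∑' x : ↥(Set.range e), G x = ∑' p : ℤ × ℤ, G (e p) := by
      rw [← (Equiv.ofInjective e einj).tsum_eq (fun x : ↥(Set.range e) => G x)]
      exact tsum_congr fun c => rfl
    -- the sum over the complement vanishes
    have hcompl : ∑' x : ↥(Set.range e)ᶜ, G x = 0 := by
      have hmem : ∀ p : ℤ × ℤ, p ∈ (Set.range e)ᶜ ↔ ¬ Even (p.1 + p.2) := by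
        intro p
        rw [Set.mem_compl_iff, hrange]
        rfl
      set σ : ↥(Set.range e)ᶜ ≃ ↥(Set.range e)ᶜ :=
        { toFun := fun x => ⟨(x.1.2, x.1.1), by
            rw [hmem]
            have := (hmem x.1).mp x.2
            simpa [add_comm] using this⟩
          invFun := fun x => ⟨(x.1.2, x.1.1), by
            rw [hmem]
            have := (hmem x.1).mp x.2
            simpa [add_comm] using this⟩
          left_inv := fun x => rfl
          right_inv := fun x => rfl } with hσ
      have hswap : ∀ x : ↥(Set.range e)ᶜ, G ((σ x) : ℤ × ℤ) = -G (x : ℤ × ℤ) := by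
        rintro ⟨⟨m, n⟩, hx⟩
        have hodd : ¬ Even (m + n) := (hmem (m, n)).mp hx
        have h1 : (-1 : ℂ) ^ m = -((-1 : ℂ) ^ n) := neg_one_zpow_of_odd_sum hodd
        simp only [hσ, hG, Equiv.coe_fn_mk]
        rw [h1]
        ring
      have hS : ∑' x : ↥(Set.range e)ᶜ, G x
          = -∑' x : ↥(Set.range e)ᶜ, G x := by
        conv_lhs => rw [← σ.tsum_eq (fun x : ↥(Set.range e)ᶜ => G x)]
        rw [← tsum_neg]
        exact tsum_congr hswap
      linear_combination hS / 2
    have hsplit := Summable.tsum_add_tsum_compl (s := Set.range e)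
      (hGsum.subtype _) (hGsum.subtype _)
    rw [hlhs, hrhs, ← hsplit, hcompl, add_zero, hrange_sum]

lemma theta3Real_coe (q : ℝ) (hq : |q| < 1) : (theta3Real q : ℂ) = theta3 (q : ℂ) := by
  rw [theta3Real, theta3, Complex.ofReal_tsum]
  exact tsum_congr fun n => by push_cast; rfl

lemma theta4Real_coe (q : ℝ) (hq : |q| < 1) : (theta4Real q : ℂ) = theta4 (q : ℂ) := by
  rw [theta4Real, theta4, Complex.ofReal_tsum]
  exact tsum_congr fun n => by push_cast; rfl

theorem theta3_sq_mul_theta4_sq :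
    (∀ q : ℂ, ‖q‖ < 1 →
      theta3 q ^ 2 * theta4 q ^ 2 = theta4 (q ^ 2) ^ 4) ∧
    (∀ q : ℝ, 0 < q → q < 1 →
      Real.sqrt (theta3Real q ^ 2 * theta4Real q ^ 2) = theta4Real (q ^ 2) ^ 2) := by
  constructor
  · intro q hq
    have h := theta3_mul_theta4 q hq
    calc theta3 q ^ 2 * theta4 q ^ 2 = (theta3 q * theta4 q) ^ 2 := by ring
      _ = (theta4 (q ^ 2) ^ 2) ^ 2 := by rw [h]
      _ = theta4 (q ^ 2) ^ 4 := by ring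
  · intro q hq0 hq1
    have habs : |q| < 1 := by rw [abs_of_pos hq0]; exact hq1
    have habs2 : |q ^ 2| < 1 := by
      rw [abs_pow]
      exact pow_lt_one₀ (abs_nonneg q) habs two_ne_zero
    have hC : ‖(q : ℂ)‖ < 1 := by rwa [Complex.norm_real, Real.norm_eq_abs]
    have h := theta3_mul_theta4 (q : ℂ) hC
    have hreal : theta3Real q * theta4Real q = theta4Real (q ^ 2) ^ 2 := by
      have : ((theta3Real q * theta4Real q : ℝ) : ℂ)
          = ((theta4Real (q ^ 2) ^ 2 : ℝ) : ℂ) := by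
        push_cast
        rw [theta3Real_coe q habs, theta4Real_coe q habs, theta4Real_coe (q ^ 2) habs2]
        push_cast
        exact h
      exact_mod_cast this
    have hfactor : theta3Real q ^ 2 * theta4Real q ^ 2
        = (theta4Real (q ^ 2) ^ 2) ^ 2 := by
      calc theta3Real q ^ 2 * theta4Real q ^ 2 = (theta3Real q * theta4Real q) ^ 2 := by ring
        _ = (theta4Real (q ^ 2) ^ 2) ^ 2 := by rw [hreal]
    rw [hfactor, Real.sqrt_sq (sq_nonneg _)]
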